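/- Let H be a real Hilbert space and A, B: D(A), D(B) ⊆ H → H monotone operators such that sI + A and sI + B are bijective from their domains onto H for some s > 0. Let η ∈ D(A) ∩ D(B) satisfy Aη + Bη = 0. Define the Peaceman–Rachford iteration η₁^{n+1} = (sI + A)^{-1}(sI - B)η₂^n, η₂^{n+1} = (sI + B)^{-1}(sI - A)η₁^{n+1}, with η₂^0 ∈ D(B). Then ⟨Aη₁^n - Aη, η₁^n - η⟩ → 0 and ⟨Bη₂^n - Bη, η₂^n - η⟩ → 0 as n → ∞. -/

import Mathlib

open Filter Topology

lemma pr_key {H : Type*} [NormedAddCommGroup H] [InnerProductSpace ℝ H]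
    (s : ℝ) (x p : H) :
    ‖s • x - p‖ ^ 2 = ‖s • x + p‖ ^ 2 - 4 * s * (inner ℝ p x : ℝ) := by
  rw [norm_sub_sq_real, norm_add_sq_real, real_inner_smul_left, real_inner_comm p x]
  ring

/-- Abstract Peaceman–Rachford convergence (Lions–Mercier): for monotone operators
`A, B` with `sI + A`, `sI + B` bijective and a solution `η` of `Aη + Bη = 0`, the
iteration satisfies `⟨Aη₁ⁿ - Aη, η₁ⁿ - η⟩ → 0` and `⟨Bη₂ⁿ - Bη, η₂ⁿ - η⟩ → 0`. -/
theorem stmt_10 {H : Type*} [NormedAddCommGroup H] [InnerProductSpace ℝ H]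
    (DA DB : Set H) (A B : H → H) (s : ℝ) (hs : 0 < s)
    (hAmono : ∀ u ∈ DA, ∀ v ∈ DA, (inner ℝ (A u - A v) (u - v) : ℝ) ≥ 0)
    (hBmono : ∀ u ∈ DB, ∀ v ∈ DB, (inner ℝ (B u - B v) (u - v) : ℝ) ≥ 0)
    (hAbij : ∀ w : H, ∃! u, u ∈ DA ∧ s • u + A u = w)
    (hBbij : ∀ w : H, ∃! u, u ∈ DB ∧ s • u + B u = w)
    (η : H) (hηA : η ∈ DA) (hηB : η ∈ DB) (hη : A η + B η = 0)
    (η₁ η₂ : ℕ → H) (hinit : η₂ 0 ∈ DB)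
    (hiter₁ : ∀ n, η₁ (n + 1) ∈ DA ∧
      s • η₁ (n + 1) + A (η₁ (n + 1)) = s • η₂ n - B (η₂ n))
    (hiter₂ : ∀ n, η₂ (n + 1) ∈ DB ∧
      s • η₂ (n + 1) + B (η₂ (n + 1)) = s • η₁ (n + 1) - A (η₁ (n + 1))) :
    Tendsto (fun n => (inner ℝ (A (η₁ (n + 1)) - A η) (η₁ (n + 1) - η) : ℝ))
        atTop (𝓝 0) ∧
      Tendsto (fun n => (inner ℝ (B (η₂ n) - B η) (η₂ n - η) : ℝ)) atTop (𝓝 0) := by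
  have hAη : A η = -B η := by
    have := hη
    have : A η + B η - B η = 0 - B η := by rw [hη]
    simpa using this
  set α : ℕ → ℝ := fun n => (inner ℝ (A (η₁ (n + 1)) - A η) (η₁ (n + 1) - η) : ℝ) with hα
  set β : ℕ → ℝ := fun n => (inner ℝ (B (η₂ n) - B η) (η₂ n - η) : ℝ) with hβ
  set c : ℕ → ℝ := fun n => ‖(s • η₂ n - B (η₂ n)) - (s • η - B η)‖ ^ 2 with hc
  set d : ℕ → ℝ := fun n =>
    ‖(s • η₁ (n + 1) - A (η₁ (n + 1))) - (s • η + B η)‖ ^ 2 with hd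
  have hαnn : ∀ n, 0 ≤ α n := fun n => hAmono _ (hiter₁ n).1 _ hηA
  have hβnn : ∀ n, 0 ≤ β n := by
    intro n
    cases n with
    | zero => exact hBmono _ hinit _ hηB
    | succ m => exact hBmono _ (hiter₂ m).1 _ hηB
  have hdc : ∀ n, d n = c n - 4 * s * α n := by
    intro n
    have h1 : s • (η₁ (n + 1) - η) - (A (η₁ (n + 1)) - A η)
        = (s • η₁ (n + 1) - A (η₁ (n + 1))) - (s • η + B η) := by
      rw [smul_sub, hAη]; abel
    have h2 : s • (η₁ (n + 1) - η) + (A (η₁ (n + 1)) - A η)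
        = (s • η₂ n - B (η₂ n)) - (s • η - B η) := by
      rw [smul_sub]
      have := (hiter₁ n).2
      have h3 : s • η₁ (n + 1) + A (η₁ (n + 1)) - (s • η + A η)
          = s • η₂ n - B (η₂ n) - (s • η - B η) := by rw [this, hAη]; abel
      calc s • η₁ (n + 1) - s • η + (A (η₁ (n + 1)) - A η)
          = s • η₁ (n + 1) + A (η₁ (n + 1)) - (s • η + A η) := by abel
        _ = _ := h3
    have := pr_key s (η₁ (n + 1) - η) (A (η₁ (n + 1)) - A η)
    rw [h1, h2] at this
    simpa [hd, hc, hα, real_inner_comm] using this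
  have hcd : ∀ n, c (n + 1) = d n - 4 * s * β (n + 1) := by
    intro n
    have h1 : s • (η₂ (n + 1) - η) - (B (η₂ (n + 1)) - B η)
        = (s • η₂ (n + 1) - B (η₂ (n + 1))) - (s • η - B η) := by
      rw [smul_sub]; abel
    have h2 : s • (η₂ (n + 1) - η) + (B (η₂ (n + 1)) - B η)
        = (s • η₁ (n + 1) - A (η₁ (n + 1))) - (s • η + B η) := by
      rw [smul_sub]
      have := (hiter₂ n).2
      calc s • η₂ (n + 1) - s • η + (B (η₂ (n + 1)) - B η)
          = s • η₂ (n + 1) + B (η₂ (n + 1)) - (s • η + B η) := by abel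
        _ = _ := by rw [this]
    have := pr_key s (η₂ (n + 1) - η) (B (η₂ (n + 1)) - B η)
    rw [h1, h2] at this
    simpa [hd, hc, hβ, real_inner_comm] using this
  -- c is antitone and nonnegative
  have hcnn : ∀ n, 0 ≤ c n := fun n => sq_nonneg _
  have hstep : ∀ n, c (n + 1) = c n - 4 * s * α n - 4 * s * β (n + 1) := by
    intro n; rw [hcd n, hdc n]
  have hanti : Antitone c := by
    apply antitone_nat_of_succ_le
    intro n
    have h1 : 0 ≤ 4 * s * α n := mul_nonneg (by linarith) (hαnn n)
    have h2 : 0 ≤ 4 * s * β (n + 1) := mul_nonneg (by linarith) (hβnn (n+1))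
    rw [hstep n]; linarith
  have hbdd : BddBelow (Set.range c) := ⟨0, by rintro _ ⟨n, rfl⟩; exact hcnn n⟩
  obtain ⟨L, hL⟩ : ∃ L, Tendsto c atTop (𝓝 L) :=
    ⟨_, tendsto_atTop_ciInf hanti hbdd⟩
  have hL' : Tendsto (fun n => c (n + 1)) atTop (𝓝 L) :=
    hL.comp (tendsto_add_atTop_nat 1)
  have hdiff : Tendsto (fun n => c n - c (n + 1)) atTop (𝓝 0) := by
    simpa using hL.sub hL'
  have hdiv : Tendsto (fun n => (c n - c (n + 1)) / (4 * s)) atTop (𝓝 0) := by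
    simpa using hdiff.div_const (4 * s)
  have h4s : (0:ℝ) < 4 * s := by linarith
  have hαle : ∀ n, α n ≤ (c n - c (n + 1)) / (4 * s) := by
    intro n
    rw [le_div_iff₀ h4s]
    have h2 : 0 ≤ 4 * s * β (n + 1) := mul_nonneg (by linarith) (hβnn (n+1))
    rw [hstep n]; nlinarith
  have hβle : ∀ n, β (n + 1) ≤ (c n - c (n + 1)) / (4 * s) := by
    intro n
    rw [le_div_iff₀ h4s]
    have h1 : 0 ≤ 4 * s * α n := mul_nonneg (by linarith) (hαnn n)
    rw [hstep n]; nlinarith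
  have hαtend : Tendsto α atTop (𝓝 0) :=
    squeeze_zero hαnn hαle hdiv
  have hβtend' : Tendsto (fun n => β (n + 1)) atTop (𝓝 0) :=
    squeeze_zero (fun n => hβnn (n + 1)) hβle hdiv
  have hβtend : Tendsto β atTop (𝓝 0) :=
    (tendsto_add_atTop_iff_nat 1).mp hβtend'
  exact ⟨hαtend, hβtend⟩
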